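/- The monoid Θ¹ of alternating words under merge-concatenation is isomorphic, as a monoid, to the monoid presented by two generators a, b subject to the relations a·a = a and b·b = b (the free monoid on {a,b} modulo these relations); under the isomorphism the generators a and b correspond to the two one-letter words. -/

import Mathlib

/-- Θ¹: the type of alternating words over the two-letter alphabet (modeled as `Bool`):
lists in which no two adjacent letters are equal. -/
def Theta1 : Type := {w : List Bool // List.Chain' (· ≠ ·) w}

/-- Merge-concatenation of two words. -/
def merge (σ τ : List Bool) : List Bool :=
  if σ = [] then τ
  else if τ = [] then σ
  else if σ.getLast? = τ.head? then σ ++ τ.tail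
  else σ ++ τ

/-- The defining relations: `a·a = a` and `b·b = b` for the two generators. -/
def idemRels : FreeMonoid Bool → FreeMonoid Bool → Prop := fun x y =>
  (x = FreeMonoid.of false * FreeMonoid.of false ∧ y = FreeMonoid.of false) ∨
  (x = FreeMonoid.of true * FreeMonoid.of true ∧ y = FreeMonoid.of true)

lemma merge_nil_left (τ : List Bool) : merge [] τ = τ := by simp [merge]

lemma merge_nil_right (σ : List Bool) : merge σ [] = σ := by
  by_cases h : σ = [] <;> simp [merge, h]

lemma merge_ne_nil {σ : List Bool} (h : σ ≠ []) (τ : List Bool) : merge σ τ ≠ [] := by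
  unfold merge; split_ifs <;> simp_all

lemma merge_eq_append {σ τ : List Bool} (hσ : σ ≠ []) (hτ : τ ≠ []) :
    merge σ τ = σ ++ (if σ.getLast? = τ.head? then τ.tail else τ) := by
  unfold merge
  split_ifs <;> first | rfl | tauto

lemma getLast?_merge (σ : List Bool) {τ : List Bool} (hτ : τ ≠ []) :
    (merge σ τ).getLast? = τ.getLast? := by
  rcases eq_or_ne σ [] with rfl | hσ
  · rw [merge_nil_left]
  rw [merge_eq_append hσ hτ]
  split_ifs with h
  · rcases τ with _ | ⟨t, ts⟩
    · exact absurd rfl hτ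
    rcases eq_or_ne ts [] with rfl | hts
    · simpa using h
    · rw [List.tail_cons, List.getLast?_append_of_ne_nil _ hts]
      rcases ts with _ | ⟨u, us⟩
      · exact absurd rfl hts
      · rw [List.getLast?_cons_cons]
  · exact List.getLast?_append_of_ne_nil _ hτ

lemma merge_assoc (σ τ ρ : List Bool) : merge (merge σ τ) ρ = merge σ (merge τ ρ) := by
  rcases eq_or_ne σ [] with rfl | hσ
  · rw [merge_nil_left, merge_nil_left]
  rcases eq_or_ne τ [] with rfl | hτ
  · rw [merge_nil_left, merge_nil_right]
  rcases eq_or_ne ρ [] with rfl | hρ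
  · rw [merge_nil_right, merge_nil_right]
  have hστ := merge_ne_nil hσ τ
  have hτρ := merge_ne_nil hτ ρ
  rw [merge_eq_append hστ hρ, getLast?_merge σ hτ, merge_eq_append hσ hτρ,
    merge_eq_append hσ hτ, merge_eq_append hτ hρ,
    List.head?_append_of_ne_nil _ hτ]
  rcases τ with _ | ⟨t, ts⟩
  · exact absurd rfl hτ
  split_ifs with h1 h2 h2 <;> simp [List.append_assoc]

lemma chain'_merge {σ τ : List Bool} (hσ : List.Chain' (· ≠ ·) σ)
    (hτ : List.Chain' (· ≠ ·) τ) : List.Chain' (· ≠ ·) (merge σ τ) := by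
  rcases eq_or_ne σ [] with rfl | hσn
  · rwa [merge_nil_left]
  rcases eq_or_ne τ [] with rfl | hτn
  · rwa [merge_nil_right]
  rw [merge_eq_append hσn hτn]
  rw [show List.Chain' _ _ = List.IsChain _ _ from rfl, List.isChain_append]
  refine ⟨hσ, ?_, ?_⟩
  · split_ifs with h
    · exact hτ.tail
    · exact hτ
  · intro x hx y hy
    split_ifs at hy with h
    · rcases τ with _ | ⟨t, ts⟩
      · exact absurd rfl hτn
      rw [List.tail_cons] at hy
      simp only [Option.mem_def] at hx
      rw [h] at hx
      obtain rfl : x = t := (Option.some.inj hx).symm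
      exact (List.isChain_cons.mp hτ).1 y hy
    · simp only [Option.mem_def] at hx hy
      intro hxy
      exact h (by rw [hx, hy, hxy])

instance : Monoid Theta1 where
  mul x y := ⟨merge x.1 y.1, chain'_merge x.2 y.2⟩
  one := ⟨[], List.isChain_nil⟩
  mul_assoc x y z := Subtype.ext (merge_assoc x.1 y.1 z.1)
  one_mul x := Subtype.ext (merge_nil_left x.1)
  mul_one x := Subtype.ext (merge_nil_right x.1)

@[simp] lemma Theta1.mul_val (x y : Theta1) : (x * y).val = merge x.val y.val := rfl
@[simp] lemma Theta1.one_val : (1 : Theta1).val = [] := rfl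

/-- the single-letter generators of Θ¹ -/
def gen (b : Bool) : Theta1 := ⟨[b], List.isChain_singleton b⟩

lemma merge_self (b : Bool) : merge [b] [b] = [b] := by simp [merge]

lemma rels_hold : ∀ a b : FreeMonoid Bool, idemRels a b →
    FreeMonoid.lift gen a = FreeMonoid.lift gen b := by
  intro a b h
  rcases h with ⟨rfl, rfl⟩ | ⟨rfl, rfl⟩ <;>
    · rw [map_mul, FreeMonoid.lift_eval_of]
      exact Subtype.ext ((Theta1.mul_val _ _).trans (merge_self _))

/-- the monoid hom from the presented monoid to Θ¹ -/
def phi : PresentedMonoid idemRels →* Theta1 := PresentedMonoid.lift gen rels_hold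

lemma phi_mk_val (u : List Bool) :
    (phi (PresentedMonoid.mk idemRels (FreeMonoid.ofList u))).val =
      u.foldr (fun b acc => merge [b] acc) [] := by
  induction u with
  | nil =>
      have : FreeMonoid.ofList ([] : List Bool) = 1 := rfl
      rw [this, map_one, map_one]
      rfl
  | cons b t ih =>
      have : FreeMonoid.ofList (b :: t) = FreeMonoid.of b * FreeMonoid.ofList t := rfl
      rw [this, map_mul, map_mul, List.foldr_cons, ← ih]
      rfl

lemma idem_gen (b : Bool) :
    PresentedMonoid.of idemRels b * PresentedMonoid.of idemRels b =
      PresentedMonoid.of idemRels b := by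
  apply Quotient.sound
  apply ConGen.Rel.of
  cases b
  · exact Or.inl ⟨rfl, rfl⟩
  · exact Or.inr ⟨rfl, rfl⟩

lemma mk_ofList_cons (b : Bool) (t : List Bool) :
    PresentedMonoid.mk idemRels (FreeMonoid.ofList (b :: t)) =
      PresentedMonoid.of idemRels b * PresentedMonoid.mk idemRels (FreeMonoid.ofList t) := rfl

lemma mk_merge_single (b : Bool) (w : List Bool) :
    PresentedMonoid.mk idemRels (FreeMonoid.ofList (merge [b] w)) =
      PresentedMonoid.of idemRels b * PresentedMonoid.mk idemRels (FreeMonoid.ofList w) := by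
  rcases w with _ | ⟨h, t⟩
  · rw [merge_nil_right]
    have : PresentedMonoid.mk idemRels (FreeMonoid.ofList ([] : List Bool)) = 1 := rfl
    rw [this, mul_one]
    rfl
  · by_cases hb : h = b
    · subst hb
      have hm : merge [h] (h :: t) = h :: t := by
        simp [merge]
      rw [hm, mk_ofList_cons, ← mul_assoc, idem_gen]
    · have hm : merge [b] (h :: t) = b :: h :: t := by
        simp [merge, Ne.symm hb]
      rw [hm, mk_ofList_cons]

lemma mk_foldr (u : List Bool) :
    PresentedMonoid.mk idemRels
        (FreeMonoid.ofList (u.foldr (fun b acc => merge [b] acc) [])) =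
      PresentedMonoid.mk idemRels (FreeMonoid.ofList u) := by
  induction u with
  | nil => rfl
  | cons b t ih => rw [List.foldr_cons, mk_merge_single, ih, mk_ofList_cons]

lemma foldr_alt {w : List Bool} (hw : List.Chain' (· ≠ ·) w) :
    w.foldr (fun b acc => merge [b] acc) [] = w := by
  induction w with
  | nil => rfl
  | cons b t ih =>
      rw [List.foldr_cons, ih hw.tail]
      rcases t with _ | ⟨h, ts⟩
      · rfl
      · have hb : b ≠ h := List.rel_of_chain_cons hw
        simp [merge, hb]

/-- The monoid Θ¹ of alternating words under merge-concatenation is isomorphic, as a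
monoid, to the monoid presented by two generators `a`, `b` subject to `a·a = a`,
`b·b = b`; the generators correspond to the two one-letter words and the identity
to the empty word. -/
theorem theta1_iso_presentedMonoid :
    ∃ e : PresentedMonoid idemRels ≃ Theta1,
      (∀ x y : PresentedMonoid idemRels, (e (x * y)).val = merge (e x).val (e y).val) ∧
      (e (PresentedMonoid.of idemRels false)).val = [false] ∧
      (e (PresentedMonoid.of idemRels true)).val = [true] ∧
      (e 1).val = [] := by
  refine ⟨⟨phi, fun w => PresentedMonoid.mk idemRels (FreeMonoid.ofList w.val), ?_, ?_⟩, ?_, ?_, ?_, ?_⟩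
  · intro x
    induction x using PresentedMonoid.inductionOn with
    | h u =>
      dsimp only
      rw [← FreeMonoid.ofList_toList u, phi_mk_val, mk_foldr]
  · intro w
    apply Subtype.ext
    rw [phi_mk_val, foldr_alt w.2]
  · intro x y
    show (phi (x * y)).val = merge (phi x).val (phi y).val
    rw [map_mul]; rfl
  · rfl
  · rfl
  · show (phi 1).val = []
    rw [map_one]; rfl
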